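/- For any matrix X and invertible density operator ρ, ‖X‖₁² ≤ tr(X* ρ^{-1/2} X ρ^{-1/2}) = γ_ρ^s(X). That is, the trace norm squared is dominated by the symmetric inverse (1/2-power) metric. -/

import Mathlib

open scoped Matrix ComplexOrder

open Matrix Complex
open scoped InnerProductSpace

variable {d : ℕ}

-- cfc lemmas
section CFC
variable {A : Matrix (Fin d) (Fin d) ℂ} (hA : A.IsHermitian)

lemma cfc_conjT (f : ℝ → ℝ) : (hA.cfc f)ᴴ = hA.cfc f := by
  unfold Matrix.IsHermitian.cfc
  simp only [Unitary.conjStarAlgAut_apply, conjTranspose_mul, conjTranspose_conjTranspose,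
    diagonal_conjTranspose]
  have : star (RCLike.ofReal (K := ℂ) ∘ f ∘ hA.eigenvalues)
      = RCLike.ofReal (K := ℂ) ∘ f ∘ hA.eigenvalues := by
    funext i; simp [Pi.star_def]
  rw [this]
  simp only [star_eq_conjTranspose, conjTranspose_conjTranspose, mul_assoc]

lemma star_mul_cancel (x : Matrix (Fin d) (Fin d) ℂ) :
    star (hA.eigenvectorUnitary : Matrix (Fin d) (Fin d) ℂ)
      * ((hA.eigenvectorUnitary : Matrix (Fin d) (Fin d) ℂ) * x) = x := by
  rw [← mul_assoc, Unitary.coe_star_mul_self, one_mul]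

lemma cfc_mul_cfc (f g : ℝ → ℝ) :
    hA.cfc f * hA.cfc g = hA.cfc (fun x => f x * g x) := by
  have hfg : (fun i => (RCLike.ofReal (K := ℂ) ∘ f ∘ hA.eigenvalues) i
        * (RCLike.ofReal (K := ℂ) ∘ g ∘ hA.eigenvalues) i)
      = RCLike.ofReal (K := ℂ) ∘ (fun x => f x * g x) ∘ hA.eigenvalues := by
    funext i; simp
  unfold Matrix.IsHermitian.cfc
  simp only [Unitary.conjStarAlgAut_apply, Matrix.mul_assoc, star_mul_cancel]
  rw [← Matrix.mul_assoc (diagonal _), diagonal_mul_diagonal, hfg]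

lemma mycfc_id : hA.cfc id = A := hA.spectral_theorem.symm

lemma mul_cfc (f : ℝ → ℝ) : A * hA.cfc f = hA.cfc (fun x => x * f x) :=
  calc A * hA.cfc f = hA.cfc id * hA.cfc f := by rw [mycfc_id hA]
  _ = hA.cfc (fun x => x * f x) := cfc_mul_cfc hA id f

lemma cfc_mul' (f : ℝ → ℝ) : hA.cfc f * A = hA.cfc (fun x => f x * x) :=
  calc hA.cfc f * A = hA.cfc f * hA.cfc id := by rw [mycfc_id hA]
  _ = hA.cfc (fun x => f x * x) := cfc_mul_cfc hA f id

lemma cfc_congr' {f g : ℝ → ℝ} (h : ∀ i, f (hA.eigenvalues i) = g (hA.eigenvalues i)) :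
    hA.cfc f = hA.cfc g := by
  have hfg : RCLike.ofReal (K := ℂ) ∘ f ∘ hA.eigenvalues
      = RCLike.ofReal (K := ℂ) ∘ g ∘ hA.eigenvalues := by funext i; simp [h i]
  unfold Matrix.IsHermitian.cfc
  rw [hfg]
end CFC

namespace Matrix.PosSemidef

noncomputable def sqrt {A : Matrix (Fin d) (Fin d) ℂ} (hA : A.PosSemidef) :
    Matrix (Fin d) (Fin d) ℂ :=
  hA.1.cfc Real.sqrt

lemma sqrt_mul_self {A : Matrix (Fin d) (Fin d) ℂ} (hA : A.PosSemidef) :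
    hA.sqrt * hA.sqrt = A := by
  unfold sqrt
  rw [cfc_mul_cfc]
  calc _ = hA.1.cfc id :=
        cfc_congr' hA.1 (fun i => Real.mul_self_sqrt (hA.eigenvalues_nonneg i))
    _ = A := mycfc_id hA.1

lemma posSemidef_sqrt {A : Matrix (Fin d) (Fin d) ℂ} (hA : A.PosSemidef) :
    hA.sqrt.PosSemidef := by
  have hR := cfc_conjT hA.1 (fun x => Real.sqrt (Real.sqrt x))
  have e : hA.1.cfc (fun x => Real.sqrt (Real.sqrt x)) * hA.1.cfc (fun x => Real.sqrt (Real.sqrt x))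
      = hA.sqrt := by
    rw [cfc_mul_cfc]
    exact cfc_congr' hA.1 (fun i => Real.mul_self_sqrt (Real.sqrt_nonneg _))
  have h := Matrix.posSemidef_conjTranspose_mul_self (hA.1.cfc (fun x => Real.sqrt (Real.sqrt x)))
  rwa [hR, e] at h

end Matrix.PosSemidef

noncomputable def vecOf (A : Matrix (Fin d) (Fin d) ℂ) : EuclideanSpace ℂ (Fin d × Fin d) :=
  (WithLp.equiv 2 (Fin d × Fin d → ℂ)).symm (fun p => A p.1 p.2)

lemma trace_ctm (A B : Matrix (Fin d) (Fin d) ℂ) :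
    Matrix.trace (Aᴴ * B)
      = ∑ p : Fin d × Fin d, (starRingEnd ℂ) (A p.1 p.2) * B p.1 p.2 := by
  rw [Fintype.sum_prod_type]
  simp only [Matrix.trace, Matrix.diag, Matrix.mul_apply, Matrix.conjTranspose_apply]
  rw [Finset.sum_comm]; rfl

lemma inner_eq_trace (A B : Matrix (Fin d) (Fin d) ℂ) :
    ⟪vecOf A, vecOf B⟫_ℂ = Matrix.trace (Aᴴ * B) := by
  rw [trace_ctm]
  simp [vecOf, PiLp.inner_apply, RCLike.inner_apply]
  exact Finset.sum_congr rfl fun _ _ => mul_comm _ _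

lemma cs_frob (A B : Matrix (Fin d) (Fin d) ℂ) :
    ‖Matrix.trace (Aᴴ * B)‖ ^ 2
      ≤ (Matrix.trace (Aᴴ * A)).re * (Matrix.trace (Bᴴ * B)).re := by
  set a := vecOf A
  set b := vecOf B
  have h1 : ‖⟪a, b⟫_ℂ‖ ≤ ‖a‖ * ‖b‖ := norm_inner_le_norm a b
  have h2 : RCLike.re ⟪a, a⟫_ℂ = ‖a‖ ^ 2 := inner_self_eq_norm_sq a
  have h3 : RCLike.re ⟪b, b⟫_ℂ = ‖b‖ ^ 2 := inner_self_eq_norm_sq b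
  rw [← inner_eq_trace, ← inner_eq_trace, ← inner_eq_trace]
  calc ‖⟪a, b⟫_ℂ‖ ^ 2 = ‖⟪a, b⟫_ℂ‖ ^ 2 := by rfl
  _ ≤ (‖a‖ * ‖b‖) ^ 2 := by
      nlinarith [norm_nonneg (⟪a, b⟫_ℂ), norm_nonneg a, norm_nonneg b]
  _ = (⟪a, a⟫_ℂ).re * (⟪b, b⟫_ℂ).re := by rw [mul_pow, ← h2, ← h3]; rfl

lemma trace_sq_re_nonneg (B : Matrix (Fin d) (Fin d) ℂ) :
    0 ≤ (Matrix.trace (Bᴴ * B)).re := by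
  have h2 : (0:ℝ) ≤ RCLike.re ⟪vecOf B, vecOf B⟫_ℂ := inner_self_nonneg
  rwa [inner_eq_trace] at h2

lemma psd_trace_re_nonneg {C : Matrix (Fin d) (Fin d) ℂ} (hC : C.PosSemidef) :
    0 ≤ (Matrix.trace C).re := by
  exact (RCLike.nonneg_iff.mp hC.trace_nonneg).1

lemma psd_trace_mul_re_nonneg {A B : Matrix (Fin d) (Fin d) ℂ}
    (hA : A.PosSemidef) (hB : B.PosSemidef) : 0 ≤ (Matrix.trace (A * B)).re := by
  have hsH : hA.sqrtᴴ = hA.sqrt := hA.posSemidef_sqrt.1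
  have e : Matrix.trace (A * B) = Matrix.trace (hA.sqrtᴴ * B * hA.sqrt) := by
    conv_lhs => rw [← hA.sqrt_mul_self]
    rw [Matrix.mul_assoc, Matrix.trace_mul_comm, hsH, Matrix.mul_assoc]
  rw [e]
  exact psd_trace_re_nonneg (hB.conjTranspose_mul_mul_same hA.sqrt)

lemma trace_sq_mono {F G : Matrix (Fin d) (Fin d) ℂ}
    (hF : F.PosSemidef) (hG : G.PosSemidef) (hFG : (G - F).PosSemidef) :
    (Matrix.trace (F * F)).re ≤ (Matrix.trace (G * G)).re := by
  have e : G * G = F * F + (G * (G - F) + (G - F) * F) := by noncomm_ring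
  have n1 : 0 ≤ (Matrix.trace (G * (G - F))).re := psd_trace_mul_re_nonneg hG hFG
  have n2 : 0 ≤ (Matrix.trace ((G - F) * F)).re := psd_trace_mul_re_nonneg hFG hF
  rw [e, Matrix.trace_add, Matrix.trace_add, Complex.add_re, Complex.add_re]
  linarith

/-- The trace (Schatten-1) norm `‖X‖₁ = tr √(XᴴX)`. -/
noncomputable def traceNorm {d : ℕ} (X : Matrix (Fin d) (Fin d) ℂ) : ℝ :=
  let hH := (Matrix.posSemidef_conjTranspose_mul_self X).1
  (hH.eigenvectorUnitary.1 * Matrix.diagonal (fun i => ((Real.sqrt (hH.eigenvalues i) : ℝ) : ℂ)) *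
    (star hH.eigenvectorUnitary : Matrix (Fin d) (Fin d) ℂ)).trace.re

/-- for any matrix `X` and invertible density operator `ρ` with
square root `ρs` (so `ρs * ρs = ρ`), the squared trace norm is dominated by the
symmetric inverse (1/2-power) metric: `‖X‖₁² ≤ tr(Xᴴ ρ^{-1/2} X ρ^{-1/2})`. -/
theorem stmt6 {d : ℕ} (ρ ρs X : Matrix (Fin d) (Fin d) ℂ)
    (hρ : ρ.PosDef) (htr : ρ.trace = 1)
    (hρs : ρs.PosDef) (hρs2 : ρs * ρs = ρ) :
    traceNorm X ^ 2 ≤ (Matrix.trace (Xᴴ * ρs⁻¹ * X * ρs⁻¹)).re := by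
  classical
  have hρsH : ρsᴴ = ρs := hρs.1
  have hdet : IsUnit ρs.det := hρs.det_pos.ne'.isUnit
  have h1 : ρs * ρs⁻¹ = 1 := Matrix.mul_nonsing_inv _ hdet
  have h2 : ρs⁻¹ * ρs = 1 := Matrix.nonsing_inv_mul _ hdet
  have hcan1 : ∀ Y : Matrix (Fin d) (Fin d) ℂ, ρs * (ρs⁻¹ * Y) = Y := fun Y => by
    rw [← Matrix.mul_assoc, h1, one_mul]
  have hcan2 : ∀ Y : Matrix (Fin d) (Fin d) ℂ, ρs⁻¹ * (ρs * Y) = Y := fun Y => by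
    rw [← Matrix.mul_assoc, h2, one_mul]
  -- square roots
  have hρsi : (ρs⁻¹).PosSemidef := hρs.posSemidef.inv
  set σ := hρsi.sqrt with hσdef
  have hσH : σᴴ = σ := hρsi.posSemidef_sqrt.1
  have hσ2 : σ * σ = ρs⁻¹ := hρsi.sqrt_mul_self
  have hσcan : ∀ Y : Matrix (Fin d) (Fin d) ℂ, σ * (σ * Y) = ρs⁻¹ * Y := fun Y => by
    rw [← Matrix.mul_assoc, hσ2]
  have hρsp : ρs.PosSemidef := hρs.posSemidef
  set τ := hρsp.sqrt with hτdef
  have hτH : τᴴ = τ := hρsp.posSemidef_sqrt.1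
  have hτ2 : τ * τ = ρs := hρsp.sqrt_mul_self
  have hτcan : ∀ Y : Matrix (Fin d) (Fin d) ℂ, τ * (τ * Y) = ρs * Y := fun Y => by
    rw [← Matrix.mul_assoc, hτ2]
  -- the partial isometry W
  set hP := Matrix.posSemidef_conjTranspose_mul_self X with hPdef
  have hH : (Xᴴ * X).IsHermitian := hP.1
  set g : ℝ → ℝ := fun x => if x = 0 then 0 else (Real.sqrt x)⁻¹ with hgdef
  set C := hH.cfc g with hCdef
  set W := X * C with hWdef
  have hWH : Wᴴ = C * Xᴴ := by rw [hWdef, conjTranspose_mul, cfc_conjT]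
  -- key1 : Wᴴ * X = hP.sqrt
  have key1 : Wᴴ * X = hP.sqrt := by
    rw [hWH, hCdef, Matrix.mul_assoc, cfc_mul' hH g,
      show hP.sqrt = hH.cfc Real.sqrt from rfl]
    refine cfc_congr' hH (fun i => ?_)
    have he : 0 ≤ hH.eigenvalues i := hP.eigenvalues_nonneg i
    set x := hH.eigenvalues i
    by_cases hx : x = 0
    · simp [hgdef, hx]
    · have hxpos : 0 < x := lt_of_le_of_ne he (Ne.symm hx)
      have hs : 0 < Real.sqrt x := Real.sqrt_pos.mpr hxpos
      simp only [hgdef, if_neg hx]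
      field_simp
      rw [Real.sq_sqrt hxpos.le]
  -- projector facts
  set g2 : ℝ → ℝ := fun x => g x * g x with hg2def
  have hQeq : W * Wᴴ = X * (hH.cfc g2 * Xᴴ) := by
    rw [hWH, hWdef, hCdef]
    simp only [Matrix.mul_assoc]
    rw [← Matrix.mul_assoc (hH.cfc g) (hH.cfc g), cfc_mul_cfc hH, ← hg2def]
  have hG2E : hH.cfc g2 * ((Xᴴ * X) * hH.cfc g2) = hH.cfc g2 := by
    rw [← Matrix.mul_assoc, cfc_mul' hH g2, cfc_mul_cfc hH]
    refine cfc_congr' hH (fun i => ?_)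
    have he : 0 ≤ hH.eigenvalues i := hP.eigenvalues_nonneg i
    set x := hH.eigenvalues i
    by_cases hx : x = 0
    · simp [hg2def, hgdef, hx]
    · have hxpos : 0 < x := lt_of_le_of_ne he (Ne.symm hx)
      have hs : 0 < Real.sqrt x := Real.sqrt_pos.mpr hxpos
      have hss : Real.sqrt x * Real.sqrt x = x := Real.mul_self_sqrt hxpos.le
      simp only [hg2def, hgdef, if_neg hx]
      field_simp
      rw [Real.sq_sqrt hxpos.le]
  have hQ2 : (W * Wᴴ) * (W * Wᴴ) = W * Wᴴ := by
    rw [hQeq]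
    calc (X * (hH.cfc g2 * Xᴴ)) * (X * (hH.cfc g2 * Xᴴ))
        = X * ((hH.cfc g2 * ((Xᴴ * X) * hH.cfc g2)) * Xᴴ) := by
          simp only [Matrix.mul_assoc]
      _ = X * (hH.cfc g2 * Xᴴ) := by rw [hG2E]
  have hQH : (W * Wᴴ)ᴴ = W * Wᴴ := by
    simp [conjTranspose_mul]
  have hQpsd : (W * Wᴴ).PosSemidef := Matrix.posSemidef_self_mul_conjTranspose W
  have h1Qpsd : (1 - W * Wᴴ).PosSemidef := by
    have he : (1 - W * Wᴴ)ᴴ * (1 - W * Wᴴ) = 1 - W * Wᴴ := by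
      rw [conjTranspose_sub, conjTranspose_one, hQH]
      have : (1 - W * Wᴴ) * (1 - W * Wᴴ)
          = 1 - W * Wᴴ - W * Wᴴ + (W * Wᴴ) * (W * Wᴴ) := by noncomm_ring
      rw [this, hQ2]; abel
    exact he ▸ Matrix.posSemidef_conjTranspose_mul_self (1 - W * Wᴴ)
  have hFpsd : (τ * ((W * Wᴴ) * τ)).PosSemidef := by
    have h := hQpsd.conjTranspose_mul_mul_same τ
    rwa [hτH, Matrix.mul_assoc] at h
  have hRFpsd : (ρs - τ * ((W * Wᴴ) * τ)).PosSemidef := by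
    have h := h1Qpsd.conjTranspose_mul_mul_same τ
    have he : τᴴ * (1 - W * Wᴴ) * τ = ρs - τ * ((W * Wᴴ) * τ) := by
      rw [hτH, mul_sub, mul_one, sub_mul, hτ2, Matrix.mul_assoc]
    rwa [he] at h
  have hFF : (Matrix.trace ((τ * ((W * Wᴴ) * τ)) * (τ * ((W * Wᴴ) * τ)))).re ≤ 1 := by
    have h := trace_sq_mono hFpsd hρsp hRFpsd
    rwa [hρs2, htr, Complex.one_re] at h
  -- trace identities by cycling
  have I1 : Matrix.trace ((σ * (ρs * W * ρs) * σ)ᴴ * (σ * X * σ)) = Matrix.trace (Wᴴ * X) := by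
    simp only [conjTranspose_mul, conjTranspose_conjTranspose, hσH, hρsH, Matrix.mul_assoc,
      hσcan, hτcan, hcan1, hcan2, hσ2, hτ2, h1, h2, mul_one, one_mul]
    rw [Matrix.trace_mul_comm]
    simp only [Matrix.mul_assoc, hσcan, hτcan, hcan1, hcan2, hσ2, hτ2, h1, h2, mul_one, one_mul]
    rw [Matrix.trace_mul_comm]
    simp only [Matrix.mul_assoc, hσcan, hτcan, hcan1, hcan2, hσ2, hτ2, h1, h2, mul_one, one_mul]
  have I2 : Matrix.trace ((σ * (ρs * W * ρs) * σ)ᴴ * (σ * (ρs * W * ρs) * σ))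
      = Matrix.trace (Wᴴ * (ρs * (W * ρs))) := by
    simp only [conjTranspose_mul, conjTranspose_conjTranspose, hσH, hρsH, Matrix.mul_assoc,
      hσcan, hτcan, hcan1, hcan2, hσ2, hτ2, h1, h2, mul_one, one_mul]
    rw [Matrix.trace_mul_comm]
    simp only [Matrix.mul_assoc, hσcan, hτcan, hcan1, hcan2, hσ2, hτ2, h1, h2, mul_one, one_mul]
    rw [Matrix.trace_mul_comm]
    simp only [Matrix.mul_assoc, hσcan, hτcan, hcan1, hcan2, hσ2, hτ2, h1, h2, mul_one, one_mul]
  have I3 : Matrix.trace ((σ * X * σ)ᴴ * (σ * X * σ))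
      = Matrix.trace (Xᴴ * ρs⁻¹ * X * ρs⁻¹) := by
    simp only [conjTranspose_mul, conjTranspose_conjTranspose, hσH, hρsH, Matrix.mul_assoc,
      hσcan, hτcan, hcan1, hcan2, hσ2, hτ2, h1, h2, mul_one, one_mul]
    rw [Matrix.trace_mul_comm]
    simp only [Matrix.mul_assoc, hσcan, hτcan, hcan1, hcan2, hσ2, hτ2, h1, h2, mul_one, one_mul]
  have I4 : Matrix.trace (ρsᴴ * (Wᴴ * (ρs * W))) = Matrix.trace (Wᴴ * (ρs * (W * ρs))) := by
    simp only [hρsH]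
    rw [Matrix.trace_mul_comm]
    simp only [Matrix.mul_assoc]
  have I6 : Matrix.trace ((Wᴴ * (ρs * W))ᴴ * (Wᴴ * (ρs * W)))
      = Matrix.trace ((W * Wᴴ) * (ρs * ((W * Wᴴ) * ρs))) := by
    simp only [conjTranspose_mul, conjTranspose_conjTranspose, hρsH, Matrix.mul_assoc]
    rw [Matrix.trace_mul_comm]
    simp only [Matrix.mul_assoc]
    rw [Matrix.trace_mul_comm]
    simp only [Matrix.mul_assoc]
  have I7 : Matrix.trace ((τ * ((W * Wᴴ) * τ))ᴴ * (τ * ((W * Wᴴ) * τ)))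
      = Matrix.trace ((W * Wᴴ) * (ρs * ((W * Wᴴ) * ρs))) := by
    simp only [conjTranspose_mul, conjTranspose_conjTranspose, hτH, Matrix.mul_assoc,
      hτcan, hτ2]
    rw [Matrix.trace_mul_comm]
    simp only [Matrix.mul_assoc, hτcan, hτ2]
  have hFHerm : (τ * ((W * Wᴴ) * τ))ᴴ = τ * ((W * Wᴴ) * τ) := by
    simp only [conjTranspose_mul, conjTranspose_conjTranspose, hτH, Matrix.mul_assoc]
  -- step C : the Gram value of W is at most 1
  have e5 : Matrix.trace (ρsᴴ * ρs) = 1 := by rw [hρsH, hρs2, htr]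
  have e6 : (Matrix.trace ((Wᴴ * (ρs * W))ᴴ * (Wᴴ * (ρs * W)))).re ≤ 1 := by
    rw [I6, ← I7, hFHerm]
    exact hFF
  have e6n : 0 ≤ (Matrix.trace ((Wᴴ * (ρs * W))ᴴ * (Wᴴ * (ρs * W)))).re :=
    trace_sq_re_nonneg _
  have t1le : (Matrix.trace (Wᴴ * (ρs * (W * ρs)))).re ≤ 1 := by
    rw [← I4]
    have csA := cs_frob ρs (Wᴴ * (ρs * W))
    rw [e5] at csA
    set z := Matrix.trace (ρsᴴ * (Wᴴ * (ρs * W))) with hzdef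
    have hz1 : ‖z‖ ^ 2 ≤ 1 := by
      rw [Complex.one_re] at csA
      nlinarith [csA, e6, e6n]
    have hz2 : z.re ≤ ‖z‖ := Complex.re_le_norm z
    nlinarith [norm_nonneg z]
  -- final assembly
  have hTN : traceNorm X = (Matrix.trace (Wᴴ * X)).re := by
    rw [key1]; rfl
  have csB := cs_frob (σ * (ρs * W * ρs) * σ) (σ * X * σ)
  rw [I1, I2, I3] at csB
  have hRHSnn : 0 ≤ (Matrix.trace (Xᴴ * ρs⁻¹ * X * ρs⁻¹)).re := by
    rw [← I3]; exact trace_sq_re_nonneg _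
  rw [hTN]
  have hre : (Matrix.trace (Wᴴ * X)).re ^ 2 ≤ ‖Matrix.trace (Wᴴ * X)‖ ^ 2 := by
    rw [Complex.sq_norm, Complex.normSq_apply]
    nlinarith [sq_nonneg (Matrix.trace (Wᴴ * X)).im]
  nlinarith [t1le, hRHSnn, csB, hre]
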